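/- For every a > 1 and every ε ∈ Σ whose head is (ε₀, ε₁, ε₂, …) = (+1, -1, -1, -1, …), the derivative of the function b ↦ q(ε)(a, b) at b = 0 equals (1 - 2/a) / (a(a-1)²). In particular, for a = 2 this derivative is 0. -/

import Mathlib

open Filter

/-- Depth-`k` truncation of the continued fraction
`r_n(ε)(a,b) = 1/(aε_n + b/(aε_{n+1} + b/(aε_{n+2} + ⋯)))`. -/
noncomputable def rTrunc (a b : ℝ) (ε : ℤ → ℝ) : ℕ → ℤ → ℝ
  | 0, n => 1 / (a * ε n)
  | k + 1, n => 1 / (a * ε n + b * rTrunc a b ε k (n + 1))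

/-- The continued fraction `r_n(ε)(a,b)`, as the limit of its finite truncations. -/
noncomputable def rCF (a b : ℝ) (ε : ℤ → ℝ) (n : ℤ) : ℝ :=
  limUnder atTop (fun k => rTrunc a b ε k n)

/-- Depth-`k` truncation of the continued fraction
`s_n(ε)(a,b) = 1/(-aε_n + b/(-aε_{n-1} + b/(-aε_{n-2} + ⋯)))`. -/
noncomputable def sTrunc (a b : ℝ) (ε : ℤ → ℝ) : ℕ → ℤ → ℝ
  | 0, n => 1 / (-(a * ε n))
  | k + 1, n => 1 / (-(a * ε n) + b * sTrunc a b ε k (n - 1))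

/-- The continued fraction `s_n(ε)(a,b)`, as the limit of its finite truncations. -/
noncomputable def sCF (a b : ℝ) (ε : ℤ → ℝ) (n : ℤ) : ℝ :=
  limUnder atTop (fun k => sTrunc a b ε k n)

/-- `p(ε)(a,b) = 1 - b s₋₂ + b² s₋₂s₋₃ - b³ s₋₂s₋₃s₋₄ + ⋯`. -/
noncomputable def pFun (a b : ℝ) (ε : ℤ → ℝ) : ℝ :=
  ∑' k : ℕ, (-b) ^ k * ∏ j ∈ Finset.range k, sCF a b ε (-2 - (j : ℤ))

/-- `q(ε)(a,b) = r₀ - r₀r₁ + r₀r₁r₂ - ⋯`. -/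
noncomputable def qFun (a b : ℝ) (ε : ℤ → ℝ) : ℝ :=
  ∑' n : ℕ, (-1 : ℝ) ^ n * ∏ j ∈ Finset.range (n + 1), rCF a b ε (j : ℤ)

set_option maxHeartbeats 1000000 in
lemma qFun_eq (a : ℝ) (ha : 1 < a) (ε : ℤ → ℝ) (hε0 : ε 0 = 1)
    (hε : ∀ n : ℤ, 1 ≤ n → ε n = -1) (b : ℝ)
    (hb : |b| < min (min 1 (a - 1)) ((a ^ 2 - 1) / 8)) :
    qFun a b ε = ((a + b * (-2 / (a + Real.sqrt (a ^ 2 + 4 * b)))) *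
      (1 + (-2 / (a + Real.sqrt (a ^ 2 + 4 * b)))))⁻¹ := by
  have ha0 : (0:ℝ) < a := by linarith
  have hb1 : |b| < 1 := lt_of_lt_of_le hb (le_trans (min_le_left _ _) (min_le_left _ _))
  have hba : |b| < a - 1 := lt_of_lt_of_le hb (le_trans (min_le_left _ _) (min_le_right _ _))
  have hb8 : |b| < (a ^ 2 - 1) / 8 := lt_of_lt_of_le hb (min_le_right _ _)
  have habs : (0:ℝ) ≤ |b| := abs_nonneg b
  have hbl : -|b| ≤ b := neg_abs_le b
  have hbu : b ≤ |b| := le_abs_self b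
  obtain ⟨s, hsdef⟩ : ∃ x : ℝ, x = Real.sqrt (a ^ 2 + 4 * b) := ⟨_, rfl⟩
  rw [← hsdef]
  have hpos : (0:ℝ) < a ^ 2 + 4 * b := by nlinarith
  have hs2 : s ^ 2 = a ^ 2 + 4 * b := by rw [hsdef]; exact Real.sq_sqrt hpos.le
  have hs0 : 0 ≤ s := hsdef ▸ Real.sqrt_nonneg _
  have hs1 : 1 < s := by nlinarith
  obtain ⟨R, hRdef⟩ : ∃ x : ℝ, x = -2 / (a + s) := ⟨_, rfl⟩
  rw [← hRdef]
  have has : (0:ℝ) < a + s := by linarith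
  have h2as : (2:ℝ) < a + s := by linarith
  -- bounds on R
  have hRneg : R < 0 := hRdef ▸ div_neg_of_neg_of_pos (by norm_num) has
  have hRgt : -1 < R := by
    rw [hRdef, neg_div, neg_lt_neg_iff]
    exact (div_lt_one has).mpr (by linarith)
  have hRabs : |R| < 1 := abs_lt.mpr ⟨hRgt, by linarith⟩
  -- fixed point equation
  have hdenR : -a + b * R < -1 := by
    have h1 : b * R ≤ |b * R| := le_abs_self _
    have h2 : |b * R| ≤ |b| := by
      rw [abs_mul]
      nlinarith [abs_nonneg R]
    linarith
  have hdenR0 : -a + b * R ≠ 0 := by linarith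
  have hfix : R = 1 / (-a + b * R) := by
    have hkey : b * R ^ 2 - a * R - 1 = 0 := by
      rw [hRdef]
      field_simp
      nlinarith [hs2]
    rw [eq_div_iff hdenR0]
    nlinarith [hkey]
  -- contraction constant
  obtain ⟨c, hcdef⟩ : ∃ x : ℝ, x = |b| / (a - |b|) ^ 2 := ⟨_, rfl⟩
  have hd1 : (1:ℝ) < a - |b| := by linarith
  have hd0 : (0:ℝ) < a - |b| := by linarith
  have hc0 : 0 ≤ c := by rw [hcdef]; positivity
  have hsq : a - |b| ≤ (a - |b|) * (a - |b|) :=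
    le_mul_of_one_le_left hd0.le hd1.le
  have hc1 : c < 1 := by
    rw [hcdef, div_lt_one (pow_pos hd0 2), pow_two]
    linarith
  -- main induction
  have hind : ∀ k : ℕ, ∀ n : ℤ, 1 ≤ n →
      |rTrunc a b ε k n| ≤ 1 ∧ |rTrunc a b ε k n - R| ≤ 2 * c ^ k := by
    intro k
    induction k with
    | zero =>
      intro n hn
      have h1 : rTrunc a b ε 0 n = -a⁻¹ := by
        simp [rTrunc, hε n hn, inv_neg]
      have hia : 0 < a⁻¹ := inv_pos.mpr ha0
      have hia1 : a⁻¹ ≤ 1 := by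
        have h2 : a⁻¹ * a = 1 := inv_mul_cancel₀ ha0.ne'
        nlinarith
      have h4 : |a⁻¹| ≤ 1 := by rw [abs_of_pos hia]; exact hia1
      constructor
      · rw [h1, abs_neg]; exact h4
      · rw [h1, pow_zero, mul_one]
        have h3 := abs_sub_le (-a⁻¹) 0 R
        simp only [sub_zero, zero_sub, abs_neg] at h3
        linarith [hRabs.le]
    | succ k ih =>
      intro n hn
      obtain ⟨hT1, hT2⟩ := ih (n + 1) (by linarith)
      set t : ℝ := rTrunc a b ε k (n + 1) with htdef
      have he : rTrunc a b ε (k + 1) n = 1 / (-a + b * t) := by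
        simp only [rTrunc, hε n hn, mul_neg_one, ← htdef]
      have hbt : |b * t| ≤ |b| := by
        rw [abs_mul]; nlinarith [abs_nonneg t]
      have hbtl : b * t ≤ |b| := le_trans (le_abs_self _) hbt
      have hbtg : -|b| ≤ b * t := by
        have := neg_abs_le (b * t); linarith
      have hxneg : -a + b * t < -1 := by linarith
      have hx0 : -a + b * t ≠ 0 := by linarith
      have hxabs : a - |b| ≤ |(-a + b * t)| := by
        rw [abs_of_neg (by linarith : -a + b * t < 0)]
        linarith
      have hyabs : a - |b| ≤ |(-a + b * R)| := by
        have hbR : b * R ≤ |b| := by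
          have h2 : |b * R| ≤ |b| := by rw [abs_mul]; nlinarith [abs_nonneg R]
          linarith [le_abs_self (b * R)]
        rw [abs_of_neg (by linarith : -a + b * R < 0)]
        linarith
      constructor
      · rw [he, abs_div, abs_one]
        exact (div_le_one (by linarith)).mpr (by linarith)
      · rw [he]
        have hgen : ∀ x y : ℝ, x ≠ 0 → y ≠ 0 → 1 / x - 1 / y = (y - x) / (x * y) := by
          intro x y hx hy
          field_simp
        have hdiff : 1 / (-a + b * t) - R = b * (R - t) / ((-a + b * t) * (-a + b * R)) := by
          calc 1 / (-a + b * t) - R = 1 / (-a + b * t) - 1 / (-a + b * R) := by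
                rw [← hfix]
            _ = ((-a + b * R) - (-a + b * t)) / ((-a + b * t) * (-a + b * R)) :=
                hgen _ _ hx0 hdenR0
            _ = b * (R - t) / ((-a + b * t) * (-a + b * R)) := by ring
        rw [hdiff, abs_div]
        have hnum : |b * (R - t)| ≤ |b| * (2 * c ^ k) := by
          rw [abs_mul]
          apply mul_le_mul_of_nonneg_left _ habs
          rw [abs_sub_comm]
          exact hT2
        have hden : (a - |b|) ^ 2 ≤ |(-a + b * t) * (-a + b * R)| := by
          rw [abs_mul]
          nlinarith
        calc |b * (R - t)| / |(-a + b * t) * (-a + b * R)|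
            ≤ |b| * (2 * c ^ k) / (a - |b|) ^ 2 := by
              apply div_le_div₀ (by positivity) hnum (by nlinarith) hden
          _ = 2 * c ^ (k + 1) := by
              rw [pow_succ, hcdef]
              ring
  -- convergence of tails
  have htail : ∀ n : ℤ, 1 ≤ n → Tendsto (fun k => rTrunc a b ε k n) atTop (nhds R) := by
    intro n hn
    rw [tendsto_iff_dist_tendsto_zero]
    refine squeeze_zero (g := fun k => 2 * c ^ k) (fun k => dist_nonneg) (fun k => ?_) ?_
    · rw [Real.dist_eq]
      exact (hind k n hn).2
    · have h := (tendsto_pow_atTop_nhds_zero_of_lt_one hc0 hc1).const_mul (2:ℝ)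
      simpa using h
  have hrCF_tail : ∀ n : ℤ, 1 ≤ n → rCF a b ε n = R := fun n hn =>
    (htail n hn).limUnder_eq
  -- the head
  have hne0 : a + b * R ≠ 0 := by
    have hbR : -|b| ≤ b * R := by
      have h2 : |b * R| ≤ |b| := by rw [abs_mul]; nlinarith [abs_nonneg R]
      linarith [neg_abs_le (b * R)]
    have : 0 < a + b * R := by linarith
    exact this.ne'
  have hhead : Tendsto (fun k => rTrunc a b ε k 0) atTop (nhds (1 / (a + b * R))) := by
    have hkey : ∀ k : ℕ, rTrunc a b ε (k + 1) 0 = 1 / (a + b * rTrunc a b ε k 1) := by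
      intro k
      simp only [rTrunc, hε0, mul_one]
      norm_num
    have h1 : Tendsto (fun k => 1 / (a + b * rTrunc a b ε k 1)) atTop
        (nhds (1 / (a + b * R))) :=
      Tendsto.div tendsto_const_nhds
        (tendsto_const_nhds.add ((htail 1 le_rfl).const_mul b)) hne0
    have h2 : Tendsto (fun k => rTrunc a b ε (k + 1) 0) atTop (nhds (1 / (a + b * R))) := by
      simpa only [hkey] using h1
    exact (tendsto_add_atTop_iff_nat 1).mp h2
  have hrCF0 : rCF a b ε 0 = 1 / (a + b * R) := hhead.limUnder_eq
  -- the series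
  have hprod : ∀ n : ℕ, ∏ j ∈ Finset.range (n + 1), rCF a b ε (j : ℤ) =
      1 / (a + b * R) * R ^ n := by
    intro n
    rw [Finset.prod_range_succ']
    have h1 : ∀ j ∈ Finset.range n, rCF a b ε ((j : ℕ) + 1 : ℕ) = R := by
      intro j _
      have h2 : (((j : ℕ) + 1 : ℕ) : ℤ) = (j : ℤ) + 1 := by push_cast; ring
      rw [h2]
      exact hrCF_tail _ (by omega)
    rw [Finset.prod_congr rfl h1, Finset.prod_const, Finset.card_range]
    push_cast
    rw [hrCF0]
    ring
  have hterm : ∀ n : ℕ, (-1 : ℝ) ^ n * ∏ j ∈ Finset.range (n + 1), rCF a b ε (j : ℤ) =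
      1 / (a + b * R) * (-R) ^ n := by
    intro n
    rw [hprod n, neg_pow R n]
    ring
  have hgeo : ∑' n : ℕ, (-R) ^ n = (1 - (-R))⁻¹ := by
    apply tsum_geometric_of_norm_lt_one
    rw [Real.norm_eq_abs, abs_neg]
    exact hRabs
  have h1R : (1:ℝ) + R ≠ 0 := by exact ne_of_gt (by linarith)
  calc qFun a b ε = ∑' n : ℕ, 1 / (a + b * R) * (-R) ^ n := by
        rw [qFun]; exact tsum_congr hterm
    _ = 1 / (a + b * R) * ∑' n : ℕ, (-R) ^ n := tsum_mul_left
    _ = 1 / (a + b * R) * (1 + R)⁻¹ := by rw [hgeo]; norm_num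
    _ = ((a + b * R) * (1 + R))⁻¹ := by
        rw [mul_inv, one_div]

set_option maxHeartbeats 400000 in
lemma hasDerivG (a : ℝ) (ha : 1 < a) :
    HasDerivAt (fun b => ((a + b * (-2 / (a + Real.sqrt (a ^ 2 + 4 * b)))) *
      (1 + (-2 / (a + Real.sqrt (a ^ 2 + 4 * b)))))⁻¹)
      ((1 - 2 / a) / (a * (a - 1) ^ 2)) 0 := by
  have ha0 : (0:ℝ) < a := by linarith
  have hS : Real.sqrt (a ^ 2 + 4 * (0:ℝ)) = a := by
    rw [show a ^ 2 + 4 * (0:ℝ) = a ^ 2 by ring]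
    exact Real.sqrt_sq ha0.le
  have h1 : HasDerivAt (fun b : ℝ => a ^ 2 + 4 * b) 4 0 := by
    simpa using ((hasDerivAt_id (0:ℝ)).const_mul (4:ℝ)).const_add (a ^ 2)
  have hne1 : a ^ 2 + 4 * (0:ℝ) ≠ 0 := by nlinarith
  have h2 := h1.sqrt hne1
  have h3 : HasDerivAt (fun b : ℝ => a + Real.sqrt (a ^ 2 + 4 * b))
      (4 / (2 * Real.sqrt (a ^ 2 + 4 * 0))) 0 := h2.const_add a
  have hne2 : a + Real.sqrt (a ^ 2 + 4 * (0:ℝ)) ≠ 0 := by rw [hS]; nlinarith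
  have hR := (hasDerivAt_const (0:ℝ) (-2:ℝ)).div h3 hne2
  have hbR := (hasDerivAt_id (0:ℝ)).mul hR
  have hA := hbR.const_add a
  have hB := hR.const_add 1
  have hAB := hA.mul hB
  have hne3 : (a + (0:ℝ) * (-2 / (a + Real.sqrt (a ^ 2 + 4 * 0)))) *
      (1 + -2 / (a + Real.sqrt (a ^ 2 + 4 * 0))) ≠ 0 := by
    rw [hS]
    have h0 : (a + (0:ℝ) * (-2 / (a + a))) * (1 + -2 / (a + a)) = a - 1 := by
      have : a + a ≠ 0 := by positivity
      field_simp
      ring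
    rw [h0]
    exact sub_ne_zero.mpr (ne_of_gt ha)
  have final := hAB.inv hne3
  refine final.congr_deriv ?_
  symm
  simp only [Pi.mul_apply, Pi.div_apply, id]
  rw [hS]
  have ha1 : a - 1 ≠ 0 := sub_ne_zero.mpr (ne_of_gt ha)
  have h2a : a + a ≠ 0 := by positivity
  simp only [id_eq, zero_mul, mul_zero, add_zero, zero_add, one_mul]
  have h4 : (1:ℝ) + -2 / (a + a) ≠ 0 := by
    have h5 : (1:ℝ) + -2 / (a + a) = (a - 1) / a := by field_simp; ring
    rw [h5]
    exact div_ne_zero ha1 ha0.ne'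
  have hP : a ^ 7 * 128 - a ^ 8 * 256 + a ^ 9 * 128 ≠ 0 := by
    have he : a ^ 7 * 128 - a ^ 8 * 256 + a ^ 9 * 128 = 128 * a ^ 7 * (a - 1) ^ 2 := by ring
    rw [he]
    have h6 : (0:ℝ) < (a - 1) ^ 2 := by nlinarith
    have h7 : (0:ℝ) < 128 * a ^ 7 := by positivity
    nlinarith
  rw [div_eq_div_iff (by positivity) (by positivity)]
  field_simp
  ring

theorem deriv_q_at_zero :
    (∀ a : ℝ, 1 < a → ∀ ε : ℤ → ℝ, (∀ n : ℤ, ε n = 1 ∨ ε n = -1) →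
      ε 0 = 1 → (∀ n : ℤ, 1 ≤ n → ε n = -1) →
      HasDerivAt (fun b => qFun a b ε) ((1 - 2 / a) / (a * (a - 1) ^ 2)) 0) ∧
    (∀ ε : ℤ → ℝ, (∀ n : ℤ, ε n = 1 ∨ ε n = -1) →
      ε 0 = 1 → (∀ n : ℤ, 1 ≤ n → ε n = -1) →
      HasDerivAt (fun b => qFun 2 b ε) 0 0) := by
  have main : ∀ a : ℝ, 1 < a → ∀ ε : ℤ → ℝ,
      ε 0 = 1 → (∀ n : ℤ, 1 ≤ n → ε n = -1) →
      HasDerivAt (fun b => qFun a b ε) ((1 - 2 / a) / (a * (a - 1) ^ 2)) 0 := by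
    intro a ha ε hε0 hε1
    have hδ : 0 < min (min 1 (a - 1)) ((a ^ 2 - 1) / 8) :=
      lt_min (lt_min one_pos (by linarith)) (by nlinarith)
    apply (hasDerivG a ha).congr_of_eventuallyEq
    filter_upwards [Metric.ball_mem_nhds (0:ℝ) hδ] with b hb
    exact qFun_eq a ha ε hε0 hε1 b (by simpa [Real.dist_eq] using hb)
  constructor
  · intro a ha ε _ hε0 hε1
    exact main a ha ε hε0 hε1
  · intro ε hε hε0 hε1
    have h := main 2 (by norm_num) ε hε0 hε1
    norm_num at h
    exact h
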